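/- Fix n ≥ 1 and m ≥ 2, and suppose P′(n,m−1) holds: for all real symmetric n×n matrices B₁, …, B_{m−1}, 2 Σ_{1≤i<j≤m−1} ‖[B_i,B_j]‖² ≤ (3/2)(Σ ‖B_i‖²)² − Σ ‖B_i‖⁴. Suppose furthermore that the inequality P′(n,m), namely 2 Σ_{1≤i<j≤m} ‖[A_i,A_j]‖² ≤ (3/2)(Σ_{i=1}^m ‖A_i‖²)² − Σ_{i=1}^m ‖A_i‖⁴, holds for all real symmetric n×n matrices A₁, …, A_m satisfying ‖A₁‖² ≤ Σ_{i=2}^m ‖A_i‖². Then P′(n,m) holds for all real symmetric n×n matrices A₁, …, A_m satisfying ‖A₁‖ ≥ ‖A₂‖ ≥ … ≥ ‖A_m‖. -/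

import Mathlib

open Matrix BigOperators

/-- Frobenius norm squared of a real `n × n` matrix: the sum of the squares of all entries. -/
noncomputable def frobSq {n : ℕ} (A : Matrix (Fin n) (Fin n) ℝ) : ℝ :=
  ∑ i, ∑ j, (A i j) ^ 2

/-- The commutator `[A, B] = A * B - B * A`. -/
def mcomm {n : ℕ} (A B : Matrix (Fin n) (Fin n) ℝ) : Matrix (Fin n) (Fin n) ℝ :=
  A * B - B * A

lemma frobSq_nonneg {n : ℕ} (A : Matrix (Fin n) (Fin n) ℝ) : 0 ≤ frobSq A :=
  Finset.sum_nonneg fun _ _ => Finset.sum_nonneg fun _ _ => sq_nonneg _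

lemma frobSq_smul {n : ℕ} (c : ℝ) (A : Matrix (Fin n) (Fin n) ℝ) :
    frobSq (c • A) = c ^ 2 * frobSq A := by
  simp [frobSq, Finset.mul_sum, mul_pow]

lemma mcomm_smul_left {n : ℕ} (c : ℝ) (A B : Matrix (Fin n) (Fin n) ℝ) :
    mcomm (c • A) B = c • mcomm A B := by
  simp [mcomm, smul_sub, Matrix.smul_mul, Matrix.mul_smul]

lemma frobSq_eq_trace {n : ℕ} (A : Matrix (Fin n) (Fin n) ℝ) :
    frobSq A = (Aᴴ * A).trace := by
  simp only [frobSq, Matrix.trace, Matrix.diag, Matrix.mul_apply, Matrix.conjTranspose_apply,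
    star_trivial]
  rw [Finset.sum_comm]
  congr 1; ext i; congr 1; ext j; ring

lemma frobSq_conj {n : ℕ} (U M : Matrix (Fin n) (Fin n) ℝ)
    (h1 : Uᴴ * U = 1) (h2 : U * Uᴴ = 1) :
    frobSq (U * M * Uᴴ) = frobSq M := by
  rw [frobSq_eq_trace, frobSq_eq_trace]
  have : (U * M * Uᴴ)ᴴ * (U * M * Uᴴ) = U * (Mᴴ * M) * Uᴴ := by
    simp only [Matrix.conjTranspose_mul, Matrix.conjTranspose_conjTranspose, Matrix.mul_assoc]
    rw [show Uᴴ * (U * (M * Uᴴ)) = (Uᴴ * U) * (M * Uᴴ) from (Matrix.mul_assoc _ _ _).symm,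
      h1, Matrix.one_mul]
  rw [this, Matrix.trace_mul_cycle, ← Matrix.mul_assoc, h1, Matrix.one_mul]

lemma frobSq_diag_comm {n : ℕ} (d : Fin n → ℝ) (C : Matrix (Fin n) (Fin n) ℝ) :
    frobSq (mcomm (Matrix.diagonal d) C) ≤ 2 * (∑ i, d i ^ 2) * frobSq C := by
  have hentry : ∀ i j, (mcomm (Matrix.diagonal d) C) i j = (d i - d j) * C i j := by
    intro i j
    simp only [mcomm, Matrix.sub_apply, Matrix.diagonal_mul, Matrix.mul_diagonal]
    ring
  have hbound : ∀ i j : Fin n, ((d i - d j) * C i j) ^ 2 ≤ 2 * (∑ k, d k ^ 2) * (C i j) ^ 2 := by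
    intro i j
    have h1 : d i ^ 2 ≤ ∑ k, d k ^ 2 :=
      Finset.single_le_sum (fun k _ => sq_nonneg (d k)) (Finset.mem_univ i)
    have h2 : d j ^ 2 ≤ ∑ k, d k ^ 2 :=
      Finset.single_le_sum (fun k _ => sq_nonneg (d k)) (Finset.mem_univ j)
    have h3 : (d i - d j) ^ 2 ≤ 2 * (∑ k, d k ^ 2) := by
      rcases eq_or_ne i j with rfl | hij
      · simp only [sub_self, ne_eq, zero_pow, OfNat.ofNat_ne_zero, not_false_eq_true]
        positivity
      · have hpair : d i ^ 2 + d j ^ 2 ≤ ∑ k, d k ^ 2 := by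
          have : ∑ k ∈ ({i, j} : Finset (Fin n)), d k ^ 2 ≤ ∑ k, d k ^ 2 :=
            Finset.sum_le_sum_of_subset_of_nonneg (Finset.subset_univ _)
              (fun k _ _ => sq_nonneg _)
          rwa [Finset.sum_pair hij] at this
        nlinarith [sq_nonneg (d i + d j)]
    calc ((d i - d j) * C i j) ^ 2 = (d i - d j) ^ 2 * (C i j) ^ 2 := by ring
      _ ≤ 2 * (∑ k, d k ^ 2) * (C i j) ^ 2 :=
        mul_le_mul_of_nonneg_right h3 (sq_nonneg _)
  calc frobSq (mcomm (Matrix.diagonal d) C)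
      = ∑ i, ∑ j, ((d i - d j) * C i j) ^ 2 := by
        simp only [frobSq, hentry]
    _ ≤ ∑ i, ∑ j, 2 * (∑ k, d k ^ 2) * (C i j) ^ 2 :=
        Finset.sum_le_sum fun i _ => Finset.sum_le_sum fun j _ => hbound i j
    _ = 2 * (∑ i, d i ^ 2) * frobSq C := by
        simp [frobSq, Finset.mul_sum]

lemma frobSq_diagonal {n : ℕ} (d : Fin n → ℝ) :
    frobSq (Matrix.diagonal d) = ∑ i, d i ^ 2 := by
  simp only [frobSq]
  congr 1; ext i
  rw [Finset.sum_eq_single i]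
  · simp
  · intro j _ hj; simp [Matrix.diagonal_apply_ne' _ hj]
  · simp

/-- Böttcher–Wenzel-type bound for symmetric `A`. -/
lemma bw_symm {n : ℕ} (A B : Matrix (Fin n) (Fin n) ℝ) (hA : A.IsSymm) :
    frobSq (mcomm A B) ≤ 2 * frobSq A * frobSq B := by
  have hH : A.IsHermitian := by
    rwa [Matrix.IsHermitian, Matrix.conjTranspose_eq_transpose_of_trivial]
  set U : Matrix (Fin n) (Fin n) ℝ := (hH.eigenvectorUnitary : Matrix (Fin n) (Fin n) ℝ) with hU
  have h1 : Uᴴ * U = 1 := by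
    rw [← Matrix.star_eq_conjTranspose]
    exact Matrix.mem_unitaryGroup_iff'.mp hH.eigenvectorUnitary.2
  have h2 : U * Uᴴ = 1 := by
    rw [← Matrix.star_eq_conjTranspose]
    exact Matrix.mem_unitaryGroup_iff.mp hH.eigenvectorUnitary.2
  set d : Fin n → ℝ := hH.eigenvalues with hd
  have hspec : A = U * Matrix.diagonal d * Uᴴ := by
    have h := hH.spectral_theorem
    rwa [Unitary.conjStarAlgAut_apply, Matrix.star_eq_conjTranspose, show RCLike.ofReal ∘ hH.eigenvalues = d by
      rw [RCLike.ofReal_real_eq_id]; rfl] at h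
  set C : Matrix (Fin n) (Fin n) ℝ := Uᴴ * B * U with hC
  have hcomm : mcomm A B = U * mcomm (Matrix.diagonal d) C * Uᴴ := by
    have e1 : U * (Matrix.diagonal d * C) * Uᴴ = U * Matrix.diagonal d * Uᴴ * B := by
      rw [hC, show U * (Matrix.diagonal d * (Uᴴ * B * U)) * Uᴴ
          = U * Matrix.diagonal d * Uᴴ * B * (U * Uᴴ) by simp only [Matrix.mul_assoc],
        h2, Matrix.mul_one]
    have e2 : U * (C * Matrix.diagonal d) * Uᴴ = B * (U * Matrix.diagonal d * Uᴴ) := by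
      rw [hC, show U * (Uᴴ * B * U * Matrix.diagonal d) * Uᴴ
          = (U * Uᴴ) * (B * (U * Matrix.diagonal d * Uᴴ)) by simp only [Matrix.mul_assoc],
        h2, Matrix.one_mul]
    rw [hspec, mcomm, mcomm, Matrix.mul_sub, Matrix.sub_mul, e1, e2]
  have hfA : frobSq A = ∑ i, d i ^ 2 := by
    rw [hspec, frobSq_conj _ _ h1 h2, frobSq_diagonal]
  have hfB : frobSq C = frobSq B := by
    have h1' : Uᴴᴴ * Uᴴ = 1 := by rwa [Matrix.conjTranspose_conjTranspose]
    have h2' : Uᴴ * Uᴴᴴ = 1 := by rwa [Matrix.conjTranspose_conjTranspose]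
    have : frobSq (Uᴴ * B * Uᴴᴴ) = frobSq B := frobSq_conj Uᴴ B h1' h2'
    rwa [Matrix.conjTranspose_conjTranspose] at this
  rw [hcomm, frobSq_conj _ _ h1 h2, hfA, ← hfB]
  exact frobSq_diag_comm d C

lemma sum_split {m : ℕ} [NeZero m] (f : Fin m → Fin m → ℝ) :
    ∑ i, ∑ j, (if i < j then f i j else 0)
      = (∑ j ∈ Finset.univ.erase 0, f 0 j)
        + ∑ i ∈ Finset.univ.erase 0, ∑ j ∈ Finset.univ.erase 0,
            (if i < j then f i j else 0) := by
  rw [← Finset.add_sum_erase _ _ (Finset.mem_univ (0 : Fin m))]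
  congr 1
  · rw [show (∑ j, if (0 : Fin m) < j then f 0 j else 0)
        = (if (0 : Fin m) < 0 then f 0 0 else 0)
          + ∑ j ∈ Finset.univ.erase 0, (if (0 : Fin m) < j then f 0 j else 0) from
      (Finset.add_sum_erase _ _ (Finset.mem_univ 0)).symm]
    simp only [lt_irrefl, if_false, zero_add]
    exact Finset.sum_congr rfl fun j hj =>
      if_pos ((Fin.pos_iff_ne_zero' j).mpr (Finset.mem_erase.mp hj).1)
  · apply Finset.sum_congr rfl
    intro i hi
    rw [show (∑ j, if i < j then f i j else 0)
        = (if i < 0 then f i 0 else 0)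
          + ∑ j ∈ Finset.univ.erase 0, (if i < j then f i j else 0) from
      (Finset.add_sum_erase _ _ (Finset.mem_univ 0)).symm]
    have h0 : ¬ i < 0 := by simp
    rw [if_neg h0, zero_add]

set_option maxHeartbeats 1000000 in
/-- Inductive step for the Li–Li inequality: if P′(n,m−1) holds, and P′(n,m) holds whenever
`‖A₁‖² ≤ Σ_{i=2}^m ‖A_i‖²`, then P′(n,m) holds for all symmetric matrices with
`‖A₁‖ ≥ ‖A₂‖ ≥ … ≥ ‖A_m‖`. -/
theorem li_li_reduction (n m : ℕ) (hn : 1 ≤ n) (hm : 2 ≤ m) [NeZero m]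
    (h₁ : ∀ B : Fin (m - 1) → Matrix (Fin n) (Fin n) ℝ, (∀ i, (B i).IsSymm) →
      2 * ∑ i, ∑ j, (if i < j then frobSq (mcomm (B i) (B j)) else 0) ≤
        (3 / 2) * (∑ i, frobSq (B i)) ^ 2 - ∑ i, (frobSq (B i)) ^ 2)
    (h₂ : ∀ A : Fin m → Matrix (Fin n) (Fin n) ℝ, (∀ i, (A i).IsSymm) →
      frobSq (A 0) ≤ ∑ i ∈ Finset.univ.filter (fun i : Fin m => i ≠ 0), frobSq (A i) →
      2 * ∑ i, ∑ j, (if i < j then frobSq (mcomm (A i) (A j)) else 0) ≤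
        (3 / 2) * (∑ i, frobSq (A i)) ^ 2 - ∑ i, (frobSq (A i)) ^ 2) :
    ∀ A : Fin m → Matrix (Fin n) (Fin n) ℝ, (∀ i, (A i).IsSymm) →
      (∀ i j : Fin m, i ≤ j → frobSq (A j) ≤ frobSq (A i)) →
      2 * ∑ i, ∑ j, (if i < j then frobSq (mcomm (A i) (A j)) else 0) ≤
        (3 / 2) * (∑ i, frobSq (A i)) ^ 2 - ∑ i, (frobSq (A i)) ^ 2 := by
  intro A hsymm _horder
  have hfilter : (Finset.univ.filter (fun i : Fin m => i ≠ 0)) = Finset.univ.erase 0 :=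
    Finset.filter_ne' _ _
  set a : ℝ := frobSq (A 0) with ha
  set s : ℝ := ∑ i ∈ Finset.univ.erase (0 : Fin m), frobSq (A i) with hs
  have hs0 : 0 ≤ s := Finset.sum_nonneg fun i _ => frobSq_nonneg _
  by_cases hcase : a ≤ s
  · exact h₂ A hsymm (by rw [hfilter]; exact hcase)
  push_neg at hcase
  have ha0 : 0 < a := lt_of_le_of_lt hs0 hcase
  -- scaled family
  set c : ℝ := Real.sqrt (s / a) with hc
  have hc2 : c ^ 2 = s / a := Real.sq_sqrt (div_nonneg hs0 ha0.le)
  set A' : Fin m → Matrix (Fin n) (Fin n) ℝ := Function.update A 0 (c • A 0) with hA'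
  have hA'0 : A' 0 = c • A 0 := Function.update_self _ _ _
  have hA'ne : ∀ i : Fin m, i ≠ 0 → A' i = A i := fun i hi => Function.update_of_ne hi _ _
  have hsymm' : ∀ i, (A' i).IsSymm := by
    intro i
    by_cases hi : i = 0
    · subst hi
      rw [hA'0, Matrix.IsSymm, Matrix.transpose_smul, hsymm 0]
    · rw [hA'ne i hi]; exact hsymm i
  have hfa' : frobSq (A' 0) = s := by
    rw [hA'0, frobSq_smul, hc2, ← ha, div_mul_cancel₀ _ ha0.ne']
  have hsum' : ∑ i ∈ Finset.univ.erase (0 : Fin m), frobSq (A' i) = s := by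
    rw [hs]
    exact Finset.sum_congr rfl fun i hi => by rw [hA'ne i (Finset.mem_erase.mp hi).1]
  have hcond : frobSq (A' 0) ≤
      ∑ i ∈ Finset.univ.filter (fun i : Fin m => i ≠ 0), frobSq (A' i) := by
    rw [hfilter, hfa', hsum']
  have H' := h₂ A' hsymm' hcond
  -- abbreviations
  set C₁ : ℝ := ∑ j ∈ Finset.univ.erase (0 : Fin m), frobSq (mcomm (A 0) (A j)) with hC₁
  set C₂ : ℝ := ∑ i ∈ Finset.univ.erase (0 : Fin m), ∑ j ∈ Finset.univ.erase (0 : Fin m),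
      (if i < j then frobSq (mcomm (A i) (A j)) else 0) with hC₂
  set S4 : ℝ := ∑ i ∈ Finset.univ.erase (0 : Fin m), (frobSq (A i)) ^ 2 with hS4
  have hC₁0 : 0 ≤ C₁ := Finset.sum_nonneg fun i _ => frobSq_nonneg _
  have hC₂0 : 0 ≤ C₂ := Finset.sum_nonneg fun i _ => Finset.sum_nonneg fun j _ => by
    split
    · exact frobSq_nonneg _
    · exact le_rfl
  -- rewrite goal sums
  have hgoal_split : ∑ i, ∑ j, (if i < j then frobSq (mcomm (A i) (A j)) else 0) = C₁ + C₂ :=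
    sum_split _
  have hsumA : ∑ i, frobSq (A i) = a + s :=
    (Finset.add_sum_erase _ _ (Finset.mem_univ (0 : Fin m))).symm
  have hsumA4 : ∑ i, (frobSq (A i)) ^ 2 = a ^ 2 + S4 :=
    (Finset.add_sum_erase _ (fun i => (frobSq (A i)) ^ 2) (Finset.mem_univ (0 : Fin m))).symm
  -- rewrite H' sums
  have hsplit' : ∑ i, ∑ j, (if i < j then frobSq (mcomm (A' i) (A' j)) else 0)
      = c ^ 2 * C₁ + C₂ := by
    rw [sum_split]
    congr 1
    · rw [hC₁, Finset.mul_sum]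
      apply Finset.sum_congr rfl
      intro j hj
      rw [hA'0, hA'ne j (Finset.mem_erase.mp hj).1, mcomm_smul_left, frobSq_smul]
    · apply Finset.sum_congr rfl
      intro i hi
      apply Finset.sum_congr rfl
      intro j hj
      rw [hA'ne i (Finset.mem_erase.mp hi).1, hA'ne j (Finset.mem_erase.mp hj).1]
  have hsumA' : ∑ i, frobSq (A' i) = s + s := by
    rw [← Finset.add_sum_erase _ _ (Finset.mem_univ (0 : Fin m)), hfa', hsum']
  have hsumA4' : ∑ i, (frobSq (A' i)) ^ 2 = s ^ 2 + S4 := by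
    rw [← Finset.add_sum_erase _ (fun i => (frobSq (A' i)) ^ 2) (Finset.mem_univ (0 : Fin m)),
      hfa']
    congr 1
    exact Finset.sum_congr rfl fun i hi => by rw [hA'ne i (Finset.mem_erase.mp hi).1]
  rw [hsplit', hsumA', hsumA4'] at H'
  rw [hgoal_split, hsumA, hsumA4]
  -- H' : 2 * (c^2 * C₁ + C₂) ≤ (3/2)*(s+s)^2 - (s^2 + S4)
  rw [hc2] at H'
  clear_value A' c C₁ C₂ S4 s a
  have hkey : 2 * s * C₁ + 2 * a * C₂ ≤ a * (5 * s ^ 2 - S4) := by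
    have hmul := mul_le_mul_of_nonneg_left H' ha0.le
    have e1 : a * (2 * (s / a * C₁ + C₂)) = 2 * s * C₁ + 2 * a * C₂ := by
      field_simp
    have e2 : a * (3 / 2 * (s + s) ^ 2 - (s ^ 2 + S4)) = a * (5 * s ^ 2 - S4) := by ring
    rw [e1, e2] at hmul
    exact hmul
  -- BW bound : C₁ ≤ 2 * a * s
  have hBW : C₁ ≤ 2 * a * s := by
    rw [hC₁, hs, show (2:ℝ) * a * (∑ i ∈ Finset.univ.erase (0 : Fin m), frobSq (A i))
        = ∑ i ∈ Finset.univ.erase (0 : Fin m), 2 * a * frobSq (A i) by rw [Finset.mul_sum]]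
    refine Finset.sum_le_sum fun j _ => ?_
    have hb := bw_symm (A 0) (A j) (hsymm 0)
    rwa [← ha] at hb
  have hBW' : (a - s) * C₁ ≤ (a - s) * (2 * a * s) :=
    mul_le_mul_of_nonneg_left hBW (by linarith)
  nlinarith [mul_nonneg ha0.le (sq_nonneg (a - s)), hkey, hBW', hC₂0, hC₁0, ha0]
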